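/- arXiv:2305.08324 — 6 statements merged into one kernel-verified Lean document; each statement's English description precedes it below -/
import Mathlib

section
/- Let k be a field of characteristic not 2 and let f₁, f₂ ∈ k[X,Y] be independent quadratics. Then the pencil k·f₁ + k·f₂ contains a hyperbola, i.e., there exist α, β ∈ k, not both zero, such that the degree-2 homogeneous part of αf₁ + βf₂ factors over k as a product of two non-proportional linear forms. -/
open MvPolynomial

/-- Two quadratics are independent if every nontrivial linear combination has degree 2. -/
def Indep {k : Type*} [Field k] (f₁ f₂ : MvPolynomial (Fin 2) k) : Prop :=
  ∀ α β : k, ¬(α = 0 ∧ β = 0) → (C α * f₁ + C β * f₂).totalDegree = 2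

/-- A quadratic is a hyperbola when its degree-2 homogeneous part factors over `k`
into two non-proportional linear forms. -/
def IsHyperbola {k : Type*} [Field k] (g : MvPolynomial (Fin 2) k) : Prop :=
  ∃ l₁ l₂ : MvPolynomial (Fin 2) k, l₁.IsHomogeneous 1 ∧ l₂.IsHomogeneous 1 ∧
    homogeneousComponent 2 g = l₁ * l₂ ∧
    ¬ ∃ c : k, l₂ = C c * l₁ ∨ l₁ = C c * l₂

namespace Stmt6Aux

variable {k : Type*} [Field k]

lemma dsum (d : Fin 2 →₀ ℕ) : d.degree = d 0 + d 1 := by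
  rw [show d.degree = d.sum (fun _ e => e) from rfl, Finsupp.sum_fintype _ _ fun _ => rfl]
  exact Fin.sum_univ_two d

lemma classify (d : Fin 2 →₀ ℕ) (h : d 0 + d 1 = 2) :
    d = Finsupp.single 0 2 ∨ d = Finsupp.single 0 1 + Finsupp.single 1 1 ∨
      d = Finsupp.single 1 2 := by
  have : (d 0 = 2 ∧ d 1 = 0) ∨ (d 0 = 1 ∧ d 1 = 1) ∨ (d 0 = 0 ∧ d 1 = 2) := by omega
  rcases this with ⟨h0, h1⟩ | ⟨h0, h1⟩ | ⟨h0, h1⟩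
  · left; ext i; fin_cases i <;> simp [Finsupp.single_apply, h0, h1]
  · right; left; ext i; fin_cases i <;> simp [Finsupp.single_apply, h0, h1]
  · right; right; ext i; fin_cases i <;> simp [Finsupp.single_apply, h0, h1]

lemma homComp2 (g : MvPolynomial (Fin 2) k) :
    homogeneousComponent 2 g =
      C (coeff (Finsupp.single 0 2) g) * X 0 ^ 2 +
      C (coeff (Finsupp.single 0 1 + Finsupp.single 1 1) g) * (X 0 * X 1) +
      C (coeff (Finsupp.single 1 2) g) * X 1 ^ 2 := by
  have e1 : (C (coeff (Finsupp.single 0 2) g) * X 0 ^ 2 : MvPolynomial (Fin 2) k)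
      = monomial (Finsupp.single 0 2) (coeff (Finsupp.single 0 2) g) := by
    rw [X_pow_eq_monomial, C_mul_monomial, mul_one]
  have e2 : (C (coeff (Finsupp.single 0 1 + Finsupp.single 1 1) g) * (X 0 * X 1) : MvPolynomial (Fin 2) k)
      = monomial (Finsupp.single 0 1 + Finsupp.single 1 1)
          (coeff (Finsupp.single 0 1 + Finsupp.single 1 1) g) := by
    rw [X, X, monomial_mul, C_mul_monomial, mul_one, mul_one]
  have e3 : (C (coeff (Finsupp.single 1 2) g) * X 1 ^ 2 : MvPolynomial (Fin 2) k)
      = monomial (Finsupp.single 1 2) (coeff (Finsupp.single 1 2) g) := by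
    rw [X_pow_eq_monomial, C_mul_monomial, mul_one]
  rw [e1, e2, e3]
  ext d
  rw [coeff_homogeneousComponent]
  simp only [coeff_add, coeff_monomial]
  by_cases hd : d.degree = 2
  · rw [if_pos hd]
    rcases classify d (by rw [← dsum]; exact hd) with h | h | h <;> subst h <;>
      · norm_num [Finsupp.ext_iff, Finsupp.single_apply, Fin.forall_fin_two]
  · rw [if_neg hd]
    have h0 : ¬ d = Finsupp.single 0 2 := by rintro rfl; apply hd; simp [dsum]
    have h1 : ¬ d = Finsupp.single 0 1 + Finsupp.single 1 1 := by rintro rfl; apply hd; simp [dsum]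
    have h2 : ¬ d = Finsupp.single 1 2 := by rintro rfl; apply hd; simp [dsum]
    rw [if_neg (fun h => h0 h.symm), if_neg (fun h => h1 h.symm), if_neg (fun h => h2 h.symm)]
    simp

lemma exists_coeff2 (g : MvPolynomial (Fin 2) k) (hg : g.totalDegree = 2) :
    coeff (Finsupp.single 0 2) g ≠ 0 ∨
    coeff (Finsupp.single 0 1 + Finsupp.single 1 1) g ≠ 0 ∨
    coeff (Finsupp.single 1 2) g ≠ 0 := by
  have hne : g ≠ 0 := by rintro rfl; simp at hg
  have hsupp : g.support.Nonempty := Finset.nonempty_iff_ne_empty.mpr (fun h => hne (support_eq_empty.mp h))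
  obtain ⟨d, hd, hde⟩ := Finset.exists_mem_eq_sup _ hsupp (fun s : Fin 2 →₀ ℕ => s.sum fun _ e => e)
  have hd2 : d 0 + d 1 = 2 := by
    rw [← dsum]
    show (d.sum fun _ e => e) = 2
    rw [totalDegree] at hg
    omega
  have hcd : coeff d g ≠ 0 := mem_support_iff.mp hd
  rcases classify d hd2 with h | h | h
  · left; rwa [← h]
  · right; left; rwa [← h]
  · right; right; rwa [← h]

lemma coeff_lin (m : Fin 2 →₀ ℕ) (α β : k) (f₁ f₂ : MvPolynomial (Fin 2) k) :
    coeff m (C α * f₁ + C β * f₂) = α * coeff m f₁ + β * coeff m f₂ := by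
  simp [coeff_add, coeff_C_mul]

lemma coeff_l1 (a u : k) :
    coeff (Finsupp.single 0 1) (C a * X 0 + C u * X 1 : MvPolynomial (Fin 2) k) = a := by
  simp [coeff_C_mul, coeff_X', Finsupp.single_eq_single_iff]

lemma coeff_l2 (a u : k) :
    coeff (Finsupp.single 1 1) (C a * X 0 + C u * X 1 : MvPolynomial (Fin 2) k) = u := by
  simp [coeff_C_mul, coeff_X', Finsupp.single_eq_single_iff]

lemma hyp1 (g : MvPolynomial (Fin 2) k)
    (h0 : coeff (Finsupp.single 0 2) g = 0)
    (hb : coeff (Finsupp.single 0 1 + Finsupp.single 1 1) g ≠ 0) : IsHyperbola g := by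
  set b := coeff (Finsupp.single 0 1 + Finsupp.single 1 1) g with hbdef
  set c := coeff (Finsupp.single 1 2) g with hcdef
  refine ⟨C 0 * X 0 + C 1 * X 1, C b * X 0 + C c * X 1,
    (isHomogeneous_C_mul_X (0:k) 0).add (isHomogeneous_C_mul_X 1 1),
    (isHomogeneous_C_mul_X b 0).add (isHomogeneous_C_mul_X c 1), ?_, ?_⟩
  · rw [homComp2 g, h0, ← hbdef, ← hcdef]
    simp only [map_zero, map_one, zero_mul, one_mul, zero_add]
    ring
  · rintro ⟨e, h | h⟩
    · have hx := congrArg (coeff (Finsupp.single 0 1)) h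
      rw [coeff_C_mul, coeff_l1, coeff_l1] at hx
      simp at hx
      exact hb hx
    · have h1 := congrArg (coeff (Finsupp.single 0 1)) h
      have h2 := congrArg (coeff (Finsupp.single 1 1)) h
      rw [coeff_C_mul, coeff_l1, coeff_l1] at h1
      rw [coeff_C_mul, coeff_l2, coeff_l2] at h2
      rcases mul_eq_zero.mp h1.symm with he | hb0
      · rw [he, zero_mul] at h2; exact one_ne_zero h2
      · exact hb hb0

lemma hyp2 (hch : (2 : k) ≠ 0) (g : MvPolynomial (Fin 2) k)
    (ha : coeff (Finsupp.single 0 2) g ≠ 0)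
    (hd : (coeff (Finsupp.single 0 1 + Finsupp.single 1 1) g)^2 =
      4 * coeff (Finsupp.single 0 2) g * coeff (Finsupp.single 1 2) g + 1) :
    IsHyperbola g := by
  set a := coeff (Finsupp.single 0 2) g with hadef
  set b := coeff (Finsupp.single 0 1 + Finsupp.single 1 1) g with hbdef
  set c := coeff (Finsupp.single 1 2) g with hcdef
  set u := (b + 1) / 2 with hudef
  set v := (b - 1) / (2 * a) with hvdef
  have h1 : a * v + u = b := by rw [hudef, hvdef]; field_simp; ring
  have h2 : u * v = c := by rw [hudef, hvdef]; field_simp; linear_combination hd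
  have huv : a * v ≠ u := by
    rw [hudef, hvdef]
    intro hav
    apply ha
    field_simp at hav
    have h4 : (2:k) * (2 * a) = 0 := absurd (show (2:k) = 0 by linear_combination -hav) hch
    rcases mul_eq_zero.mp h4 with h | h
    · exact absurd h hch
    · rcases mul_eq_zero.mp h with h' | h'
      · exact absurd h' hch
      · exact h'
  refine ⟨C a * X 0 + C u * X 1, C 1 * X 0 + C v * X 1,
    (isHomogeneous_C_mul_X a 0).add (isHomogeneous_C_mul_X u 1),
    (isHomogeneous_C_mul_X 1 0).add (isHomogeneous_C_mul_X v 1), ?_, ?_⟩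
  · rw [homComp2 g, ← hadef, ← hbdef, ← hcdef, ← h1, ← h2]
    simp only [map_add, map_mul, map_one]
    ring
  · rintro ⟨e, h | h⟩
    · have hx := congrArg (coeff (Finsupp.single 0 1)) h
      have hy := congrArg (coeff (Finsupp.single 1 1)) h
      rw [coeff_C_mul, coeff_l1, coeff_l1] at hx
      rw [coeff_C_mul, coeff_l2, coeff_l2] at hy
      exact huv (by linear_combination a * hy - u * hx)
    · have hx := congrArg (coeff (Finsupp.single 0 1)) h
      have hy := congrArg (coeff (Finsupp.single 1 1)) h
      rw [coeff_C_mul, coeff_l1, coeff_l1] at hx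
      rw [coeff_C_mul, coeff_l2, coeff_l2] at hy
      exact huv (by linear_combination v * hx - hy)

lemma indep_symm (f₁ f₂ : MvPolynomial (Fin 2) k) (hf : Indep f₁ f₂) : Indep f₂ f₁ := by
  intro α β h
  rw [add_comm]
  exact hf β α (by tauto)

lemma aux (hch : (2 : k) ≠ 0) (f₁ f₂ : MvPolynomial (Fin 2) k) (hf : Indep f₁ f₂)
    (ha1 : coeff (Finsupp.single 0 2) f₁ ≠ 0) :
    ∃ α β : k, ¬(α = 0 ∧ β = 0) ∧ IsHyperbola (C α * f₁ + C β * f₂) := by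
  set a₁ := coeff (Finsupp.single 0 2) f₁ with ha₁
  set b₁ := coeff (Finsupp.single 0 1 + Finsupp.single 1 1) f₁ with hb₁
  set c₁ := coeff (Finsupp.single 1 2) f₁ with hc₁
  set a₂ := coeff (Finsupp.single 0 2) f₂ with ha₂
  set b₂ := coeff (Finsupp.single 0 1 + Finsupp.single 1 1) f₂ with hb₂
  set c₂ := coeff (Finsupp.single 1 2) f₂ with hc₂
  by_cases hb' : a₂ * b₁ - a₁ * b₂ = 0
  · -- pencil member killing X² has no XY term; shift f₁ to make disc = 1
    have hc' : a₂ * c₁ - a₁ * c₂ ≠ 0 := by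
      intro hc0
      have hpair : ¬(a₂ = 0 ∧ -a₁ = 0) := fun h => ha1 (neg_eq_zero.mp h.2)
      rcases exists_coeff2 _ (hf a₂ (-a₁) hpair) with h | h | h
      · exact h (by rw [coeff_lin, ← ha₁, ← ha₂]; ring)
      · exact h (by rw [coeff_lin, ← hb₁, ← hb₂]; linear_combination hb')
      · exact h (by rw [coeff_lin, ← hc₁, ← hc₂]; linear_combination hc0)
    set s := (b₁^2 - 4*a₁*c₁ - 1)/(2 * 2 * a₁ * (a₂*c₁ - a₁*c₂)) with hs
    refine ⟨1 + s * a₂, -(s * a₁), ?_, ?_⟩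
    · rintro ⟨hα, hβ⟩
      have hs0 : s = 0 := by
        rcases mul_eq_zero.mp (neg_eq_zero.mp hβ) with h | h
        · exact h
        · exact absurd h ha1
      rw [hs0] at hα
      simp at hα
    · have hA : coeff (Finsupp.single 0 2) (C (1 + s * a₂) * f₁ + C (-(s * a₁)) * f₂) = a₁ := by
        rw [coeff_lin, ← ha₁, ← ha₂]; ring
      have hB : coeff (Finsupp.single 0 1 + Finsupp.single 1 1)
          (C (1 + s * a₂) * f₁ + C (-(s * a₁)) * f₂) = b₁ := by
        rw [coeff_lin, ← hb₁, ← hb₂]; linear_combination s * hb'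
      have hC : coeff (Finsupp.single 1 2) (C (1 + s * a₂) * f₁ + C (-(s * a₁)) * f₂)
          = c₁ + s * (a₂ * c₁ - a₁ * c₂) := by
        rw [coeff_lin, ← hc₁, ← hc₂]; ring
      apply hyp2 hch
      · rw [hA]; exact ha1
      · rw [hA, hB, hC, hs]
        have hE : (2 * 2 * a₁ * (a₂ * c₁ - a₁ * c₂)) ≠ 0 :=
          mul_ne_zero (mul_ne_zero (mul_ne_zero hch hch) ha1) hc'
        have key := div_mul_cancel₀ (b₁ ^ 2 - 4 * a₁ * c₁ - 1) hE
        linear_combination -key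
  · refine ⟨a₂, -a₁, fun h => ha1 (neg_eq_zero.mp h.2), ?_⟩
    apply hyp1
    · rw [coeff_lin, ← ha₁, ← ha₂]; ring
    · rw [coeff_lin, ← hb₁, ← hb₂]
      intro h
      exact hb' (by linear_combination h)

end Stmt6Aux

/-- Every pencil of affine conics contains a hyperbola. -/
theorem stmt6 {k : Type*} [Field k] (hch : (2 : k) ≠ 0)
    (f₁ f₂ : MvPolynomial (Fin 2) k) (hf : Indep f₁ f₂) :
    ∃ α β : k, ¬(α = 0 ∧ β = 0) ∧ IsHyperbola (C α * f₁ + C β * f₂) := by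
  open Stmt6Aux in
  by_cases ha1 : coeff (Finsupp.single 0 2) f₁ = 0
  · by_cases ha2 : coeff (Finsupp.single 0 2) f₂ = 0
    · by_cases hb1 : coeff (Finsupp.single 0 1 + Finsupp.single 1 1) f₁ = 0
      · by_cases hb2 : coeff (Finsupp.single 0 1 + Finsupp.single 1 1) f₂ = 0
        · exfalso
          have hc1 : coeff (Finsupp.single 1 2) f₁ ≠ 0 := by
            rcases exists_coeff2 _ (hf 1 0 (by simp)) with h | h | h
            · exact absurd (by rw [coeff_lin, ha1]; ring) h
            · exact absurd (by rw [coeff_lin, hb1]; ring) h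
            · intro h0; exact h (by rw [coeff_lin, h0]; ring)
          have hc2 : coeff (Finsupp.single 1 2) f₂ ≠ 0 := by
            rcases exists_coeff2 _ (hf 0 1 (by simp)) with h | h | h
            · exact absurd (by rw [coeff_lin, ha2]; ring) h
            · exact absurd (by rw [coeff_lin, hb2]; ring) h
            · intro h0; exact h (by rw [coeff_lin, h0]; ring)
          have hpair : ¬(coeff (Finsupp.single 1 2) f₂ = 0 ∧
              -(coeff (Finsupp.single 1 2) f₁) = 0) := fun h => hc1 (neg_eq_zero.mp h.2)
          rcases exists_coeff2 _ (hf _ _ hpair) with h | h | h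
          · exact h (by rw [coeff_lin, ha1, ha2]; ring)
          · exact h (by rw [coeff_lin, hb1, hb2]; ring)
          · exact h (by rw [coeff_lin]; ring)
        · refine ⟨0, 1, by simp, hyp1 _ ?_ ?_⟩
          · rw [coeff_lin, ha2]; ring
          · rw [coeff_lin]
            intro h
            exact hb2 (by linear_combination h)
      · refine ⟨1, 0, by simp, hyp1 _ ?_ ?_⟩
        · rw [coeff_lin, ha1]; ring
        · rw [coeff_lin]
          intro h
          exact hb1 (by linear_combination h)
    · obtain ⟨α, β, h, hh⟩ := aux hch f₂ f₁ (indep_symm _ _ hf) ha2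
      exact ⟨β, α, fun hc => h ⟨hc.2, hc.1⟩, by rwa [add_comm]⟩
  · exact aux hch f₁ f₂ hf ha1
end

section
/- Let k be an algebraically closed field of characteristic not 2, and let f₁ = XY and f₂ = (aX + bY)(cX + dY) with a,b,c,d ∈ k satisfying ad − bc ≠ 0, the pair (a,b) ≠ (0,0), the pair (c,d) ≠ (0,0), the pair (a,d) ≠ (0,0), and the pair (b,c) ≠ (0,0) (so that f₁ and f₂ are independent quadratics defining distinct degenerate hyperbolas with center the origin). Then there exist α, β ∈ k, not both zero, and e, f ∈ k, not both zero, such that αXY + β(aX + bY)(cX + dY) = (eX + fY)². That is, the pencil generated by two such degenerate hyperbolas with a common center contains a double line. -/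
open MvPolynomial

/-- Over an algebraically closed field, the pencil generated by two distinct
degenerate hyperbolas `XY` and `(aX + bY)(cX + dY)` centered at the origin
contains a double line `(eX + fY)²`. -/
theorem stmt9 {k : Type*} [Field k] [IsAlgClosed k] (hch : (2 : k) ≠ 0)
    (a b c d : k)
    (h1 : a * d - b * c ≠ 0)
    (h2 : ¬(a = 0 ∧ d = 0)) (h3 : ¬(b = 0 ∧ c = 0))
    (h4 : ¬(a = 0 ∧ b = 0)) (h5 : ¬(c = 0 ∧ d = 0)) :
    ∃ α β e f : k, ¬(α = 0 ∧ β = 0) ∧ ¬(e = 0 ∧ f = 0) ∧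
      C α * (X 0 * X 1) +
        C β * ((C a * X 0 + C b * X 1) * (C c * X 0 + C d * X 1)) =
      (C e * X 0 + C f * X 1 : MvPolynomial (Fin 2) k) ^ 2 := by
  obtain ⟨e, he⟩ := IsAlgClosed.exists_pow_nat_eq (a * c) (n := 2) (by norm_num)
  obtain ⟨f, hf⟩ := IsAlgClosed.exists_pow_nat_eq (b * d) (n := 2) (by norm_num)
  refine ⟨2 * e * f - (a * d + b * c), 1, e, f, ?_, ?_, ?_⟩
  · rintro ⟨-, h⟩; exact one_ne_zero h
  · rintro ⟨he0, hf0⟩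
    subst he0; subst hf0
    rw [zero_pow two_ne_zero, eq_comm, mul_eq_zero] at he hf
    rcases he with ha | hc <;> rcases hf with hb | hd
    · exact h4 ⟨ha, hb⟩
    · exact h2 ⟨ha, hd⟩
    · exact h3 ⟨hb, hc⟩
    · exact h5 ⟨hc, hd⟩
  · have he' : (C e : MvPolynomial (Fin 2) k) ^ 2 = C a * C c := by
      rw [← map_pow, he, map_mul]
    have hf' : (C f : MvPolynomial (Fin 2) k) ^ 2 = C b * C d := by
      rw [← map_pow, hf, map_mul]
    simp only [map_sub, map_add, map_mul, map_one, map_ofNat]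
    linear_combination (-1 : MvPolynomial (Fin 2) k) * (X 0 : MvPolynomial (Fin 2) k) ^ 2 * he' +
      (-1 : MvPolynomial (Fin 2) k) * (X 1 : MvPolynomial (Fin 2) k) ^ 2 * hf'
end

section
/- Let k be a field of characteristic not 2. Suppose g₁ = XY and g₂ = X(dX + eY + f) with d, e, f ∈ k and e ≠ 0 (so g₁ and g₂ are independent degenerate hyperbolas sharing the linear component X). Then: (1) every reducible quadratic of the form αg₁ + βg₂ + λ (α,β,λ ∈ k, (α,β) ≠ (0,0)) that is a hyperbola has λ = 0 and has X as a linear factor; and (2) the combination −e·g₁ + g₂ = X(dX + f) is a degenerate parabola (product of two linear polynomials in X alone) sharing the component X with g₁. -/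
open MvPolynomial

section Helpers

variable {k : Type*} [Field k]

private lemma rep_of_td_le (p : MvPolynomial (Fin 2) k) (hp : p.totalDegree ≤ 1) :
    p = C (coeff 0 p) + C (coeff (Finsupp.single 0 1) p) * X 0
      + C (coeff (Finsupp.single 1 1) p) * X 1 := by
  ext m
  have hm : m = Finsupp.single 0 (m 0) + Finsupp.single 1 (m 1) := by
    ext i; fin_cases i <;> simp
  have key : (m 0 = 0 ∧ m 1 = 0) ∨ (m 0 = 1 ∧ m 1 = 0) ∨ (m 0 = 0 ∧ m 1 = 1)
      ∨ 2 ≤ m 0 + m 1 := by omega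
  rcases key with ⟨h0, h1⟩ | ⟨h0, h1⟩ | ⟨h0, h1⟩ | hge
  · rw [hm, h0, h1]
    simp [coeff_C, coeff_X']
  · rw [hm, h0, h1]
    simp [coeff_C, coeff_X', Finsupp.single_eq_single_iff, eq_comm, Finsupp.single_eq_zero]
  · rw [hm, h0, h1]
    simp [coeff_C, coeff_X', Finsupp.single_eq_single_iff, eq_comm, Finsupp.single_eq_zero]
  · have hsup : m 0 + m 1 = ∑ i ∈ m.support, m i := by
      rw [show (∑ i ∈ m.support, m i) = m.sum (fun _ n => n) from rfl,
        Finsupp.sum_fintype _ _ (fun _ => rfl), Fin.sum_univ_two]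
    have hz : coeff m p = 0 := by
      apply coeff_eq_zero_of_totalDegree_lt
      omega
    have hne0 : ¬ ((0 : Fin 2 →₀ ℕ) = m) := fun h => by simp [← h] at hge
    have hne1 : ¬ (Finsupp.single (0 : Fin 2) 1 = m) := fun h => by simp [← h] at hge
    have hne2 : ¬ (Finsupp.single (1 : Fin 2) 1 = m) := fun h => by simp [← h] at hge
    have h0' : ¬ (m = 0) := fun h => hne0 h.symm
    have h1' : ¬ (m = Finsupp.single (0:Fin 2) 1) := fun h => hne1 h.symm
    have h2' : ¬ (m = Finsupp.single (1:Fin 2) 1) := fun h => hne2 h.symm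
    rw [hz]
    simp [coeff_C, coeff_C_mul, coeff_X', hne0, hne1, hne2, h0', h1', h2']

private lemma Xmuls : (X 0 * X 1 : MvPolynomial (Fin 2) k)
    = monomial (Finsupp.single 0 1 + Finsupp.single 1 1) 1 := by
  rw [X, X, monomial_mul, one_mul]

private lemma quad_coeffs {A B Cc D E F A' B' C' D' E' F' : k}
    (h : (C A * X 0^2 + C B * (X 0 * X 1) + C Cc * X 1^2 + C D * X 0 + C E * X 1 + C F :
        MvPolynomial (Fin 2) k)
      = C A' * X 0^2 + C B' * (X 0 * X 1) + C C' * X 1^2 + C D' * X 0 + C E' * X 1 + C F') :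
    A = A' ∧ B = B' ∧ Cc = C' ∧ D = D' ∧ E = E' ∧ F = F' := by
  simp only [Xmuls, C_mul_X_pow_eq_monomial, C_mul_X_eq_monomial, C_mul_monomial, mul_one] at h
  rw [show (C F : MvPolynomial (Fin 2) k) = monomial 0 F from rfl,
    show (C F' : MvPolynomial (Fin 2) k) = monomial 0 F' from rfl] at h
  refine ⟨?_, ?_, ?_, ?_, ?_, ?_⟩
  · have := congrArg (coeff (Finsupp.single 0 2)) h
    simpa [coeff_monomial, Finsupp.ext_iff, Fin.forall_fin_two] using this
  · have := congrArg (coeff (Finsupp.single 0 1 + Finsupp.single 1 1)) h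
    simpa [coeff_monomial, Finsupp.ext_iff, Fin.forall_fin_two] using this
  · have := congrArg (coeff (Finsupp.single 1 2)) h
    simpa [coeff_monomial, Finsupp.ext_iff, Fin.forall_fin_two] using this
  · have := congrArg (coeff (Finsupp.single 0 1)) h
    simpa [coeff_monomial, Finsupp.ext_iff, Fin.forall_fin_two] using this
  · have := congrArg (coeff (Finsupp.single 1 1)) h
    simpa [coeff_monomial, Finsupp.ext_iff, Fin.forall_fin_two] using this
  · have := congrArg (coeff 0) h
    simpa [coeff_monomial, Finsupp.ext_iff, Fin.forall_fin_two] using this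

private lemma hom2_eq (α β d e f lam : k) :
    homogeneousComponent 2
      (C α * (X 0 * X 1) + C β * (X 0 * (C d * X 0 + C e * X 1 + C f)) + C lam
        : MvPolynomial (Fin 2) k)
    = C (β*d) * X 0^2 + C (α + β*e) * (X 0 * X 1) := by
  have hrw : (C α * (X 0 * X 1) + C β * (X 0 * (C d * X 0 + C e * X 1 + C f)) + C lam
      : MvPolynomial (Fin 2) k)
    = C (β*d) * X 0^2 + C (α + β*e) * (X 0 * X 1) + C (β*f) * X 0 + C lam := by
    simp only [C_mul, C_add]; ring
  rw [hrw]
  have h1 : ((C (β*d) * X 0^2 : MvPolynomial (Fin 2) k)).IsHomogeneous 2 :=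
    isHomogeneous_C_mul_X_pow _ _ _
  have h2 : ((C (α+β*e) * (X 0 * X 1) : MvPolynomial (Fin 2) k)).IsHomogeneous 2 :=
    ((isHomogeneous_X _ 0).mul (isHomogeneous_X _ 1)).C_mul _
  have h3 : ((C (β*f) * X 0 : MvPolynomial (Fin 2) k)).IsHomogeneous 1 :=
    isHomogeneous_C_mul_X _ _
  have h4 : ((C lam : MvPolynomial (Fin 2) k)).IsHomogeneous 0 := isHomogeneous_C _ _
  rw [map_add, map_add, map_add,
    homogeneousComponent_of_mem ((mem_homogeneousSubmodule _ _).2 h1),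
    homogeneousComponent_of_mem ((mem_homogeneousSubmodule _ _).2 h2),
    homogeneousComponent_of_mem ((mem_homogeneousSubmodule _ _).2 h3),
    homogeneousComponent_of_mem ((mem_homogeneousSubmodule _ _).2 h4)]
  simp [C_mul]

end Helpers

/-- For `g₁ = XY` and `g₂ = X(dX + eY + f)` with `e ≠ 0`: (1) every reducible
member `αg₁ + βg₂ + λ` of the affine pencil that is a hyperbola has `λ = 0` and
is divisible by `X`; (2) `-e·g₁ + g₂ = X(dX + f)` is a degenerate parabola
sharing the component `X` with `g₁`. -/
theorem stmt10 {k : Type*} [Field k] (hch : (2 : k) ≠ 0)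
    (d e f : k) (he : e ≠ 0) :
    (∀ α β lam : k, ¬(α = 0 ∧ β = 0) →
      ∀ h : MvPolynomial (Fin 2) k,
        h = C α * (X 0 * X 1) + C β * (X 0 * (C d * X 0 + C e * X 1 + C f)) + C lam →
        (∃ l₁ l₂ : MvPolynomial (Fin 2) k,
            l₁.totalDegree = 1 ∧ l₂.totalDegree = 1 ∧ h = l₁ * l₂) →
        IsHyperbola h → lam = 0 ∧ X 0 ∣ h) ∧
    C (-e) * (X 0 * X 1) + X 0 * (C d * X 0 + C e * X 1 + C f) =
      (X 0 : MvPolynomial (Fin 2) k) * (C d * X 0 + C f) := by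
  constructor
  · rintro α β lam hab h hdef ⟨l₁, l₂, hd₁, hd₂, hfac⟩ ⟨m₁, m₂, hm₁, hm₂, hprod, hnp⟩
    have hh2 : homogeneousComponent 2 h = C (β*d) * X 0^2 + C (α + β*e) * (X 0 * X 1) := by
      rw [hdef]; exact hom2_eq α β d e f lam
    -- representations of the homogeneous factors
    have hc₀₁ : coeff 0 m₁ = 0 := hm₁.coeff_eq_zero (by simp)
    have hc₀₂ : coeff 0 m₂ = 0 := hm₂.coeff_eq_zero (by simp)
    set a := coeff (Finsupp.single 0 1) m₁ with ha_def
    set b := coeff (Finsupp.single 1 1) m₁ with hb_def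
    set a' := coeff (Finsupp.single 0 1) m₂ with ha'_def
    set b' := coeff (Finsupp.single 1 1) m₂ with hb'_def
    have hrm₁ : m₁ = C a * X 0 + C b * X 1 := by
      have := rep_of_td_le m₁ hm₁.totalDegree_le
      rwa [hc₀₁, map_zero, zero_add] at this
    have hrm₂ : m₂ = C a' * X 0 + C b' * X 1 := by
      have := rep_of_td_le m₂ hm₂.totalDegree_le
      rwa [hc₀₂, map_zero, zero_add] at this
    -- Step 1 : α + β*e ≠ 0
    have hs : α + β*e ≠ 0 := by
      intro hs0
      apply hnp
      have h' : (C (β*d) * X 0^2 + C (α + β*e) * (X 0 * X 1) : MvPolynomial (Fin 2) k)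
          = (C a * X 0 + C b * X 1) * (C a' * X 0 + C b' * X 1) := by
        rw [← hh2, hprod, hrm₁, hrm₂]
      have key : (C (β*d) * X 0^2 + C (α + β*e) * (X 0 * X 1) + C 0 * X 1^2
            + C 0 * X 0 + C 0 * X 1 + C 0 : MvPolynomial (Fin 2) k)
          = C (a*a') * X 0^2 + C (a*b'+a'*b) * (X 0 * X 1) + C (b*b') * X 1^2
            + C 0 * X 0 + C 0 * X 1 + C 0 := by
        simp only [C_mul, C_add, C_0] at h' ⊢
        linear_combination h'
      obtain ⟨hA, hB, hC, -, -, -⟩ := quad_coeffs key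
      rw [hs0] at hB
      by_cases hb : b = 0
      · by_cases ha : a = 0
        · exact ⟨0, Or.inr (by rw [hrm₁, ha, hb]; simp)⟩
        · have hb' : b' = 0 := by
            have : a * b' = 0 := by rw [hb] at hB; linear_combination -hB
            exact (mul_eq_zero.1 this).resolve_left ha
          refine ⟨a' * a⁻¹, Or.inl ?_⟩
          rw [hrm₁, hrm₂, hb, hb']
          simp only [C_0, zero_mul, add_zero]
          rw [← mul_assoc, ← C_mul]
          congr 1
          field_simp
      · have hb' : b' = 0 := (mul_eq_zero.1 hC.symm).resolve_left hb
        have ha' : a' = 0 := by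
          have : a' * b = 0 := by rw [hb'] at hB; linear_combination -hB
          exact (mul_eq_zero.1 this).resolve_right hb
        exact ⟨0, Or.inl (by rw [hrm₂, ha', hb']; simp)⟩
    -- Step 2 : use the affine factorization
    set c₁ := coeff 0 l₁ with hc₁_def
    set a₁ := coeff (Finsupp.single 0 1) l₁ with ha₁_def
    set b₁ := coeff (Finsupp.single 1 1) l₁ with hb₁_def
    set c₂ := coeff 0 l₂ with hc₂_def
    set a₂ := coeff (Finsupp.single 0 1) l₂ with ha₂_def
    set b₂ := coeff (Finsupp.single 1 1) l₂ with hb₂_def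
    have hrl₁ : l₁ = C c₁ + C a₁ * X 0 + C b₁ * X 1 := rep_of_td_le l₁ hd₁.le
    have hrl₂ : l₂ = C c₂ + C a₂ * X 0 + C b₂ * X 1 := rep_of_td_le l₂ hd₂.le
    have h'' : (C α * (X 0 * X 1) + C β * (X 0 * (C d * X 0 + C e * X 1 + C f)) + C lam
          : MvPolynomial (Fin 2) k)
        = (C c₁ + C a₁ * X 0 + C b₁ * X 1) * (C c₂ + C a₂ * X 0 + C b₂ * X 1) := by
      rw [← hdef, hfac, hrl₁, hrl₂]
    have key2 : (C (β*d) * X 0^2 + C (α + β*e) * (X 0 * X 1) + C 0 * X 1^2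
          + C (β*f) * X 0 + C 0 * X 1 + C lam : MvPolynomial (Fin 2) k)
        = C (a₁*a₂) * X 0^2 + C (a₁*b₂+a₂*b₁) * (X 0 * X 1) + C (b₁*b₂) * X 1^2
          + C (a₁*c₂+a₂*c₁) * X 0 + C (b₁*c₂+b₂*c₁) * X 1 + C (c₁*c₂) := by
      simp only [C_mul, C_add, C_0]
      linear_combination h''
    obtain ⟨hA, hB, hC, hD, hE, hF⟩ := quad_coeffs key2
    by_cases hb₂ : b₂ = 0
    · have ha₂ : a₂ ≠ 0 := by
        intro h0
        rw [hb₂, h0] at hB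
        simp at hB
        exact hs hB
      have hb₁ : b₁ ≠ 0 := by
        intro h0
        rw [hb₂, h0] at hB
        simp at hB
        exact hs hB
      have hc₂0 : c₂ = 0 := by
        have : b₁ * c₂ = 0 := by rw [hb₂] at hE; linear_combination -hE
        exact (mul_eq_zero.1 this).resolve_left hb₁
      constructor
      · rw [hF, hc₂0, mul_zero]
      · refine ⟨l₁ * C a₂, ?_⟩
        rw [hfac, hrl₂, hc₂0, hb₂]
        simp only [C_0, zero_mul, add_zero, zero_add]
        ring
    · have hb₁ : b₁ = 0 := by
        rcases mul_eq_zero.1 hC.symm with h0 | h0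
        · exact h0
        · exact absurd h0 hb₂
      have ha₁ : a₁ ≠ 0 := by
        intro h0
        rw [hb₁, h0] at hB
        simp at hB
        exact hs hB
      have hc₁0 : c₁ = 0 := by
        have : b₂ * c₁ = 0 := by rw [hb₁] at hE; linear_combination -hE
        exact (mul_eq_zero.1 this).resolve_left hb₂
      constructor
      · rw [hF, hc₁0, zero_mul]
      · refine ⟨C a₁ * l₂, ?_⟩
        rw [hfac, hrl₁, hc₁0, hb₁]
        simp only [C_0, zero_mul, add_zero, zero_add]
        ring
  · simp only [C_neg]
    ring
end

section
/- Let k be an algebraically closed field of characteristic not 2 and let f₁, f₂ ∈ k[X,Y] be independent quadratics, written fᵢ = aᵢX² + 2bᵢXY + cᵢY² + 2dᵢX + 2eᵢY + gᵢ. Then the binary quadratic form Φ(U,V) = (a₁c₁ − b₁²)U² + (a₁c₂ + a₂c₁ − 2b₁b₂)UV + (a₂c₂ − b₂²)V² is not identically zero. -/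
open MvPolynomial

lemma aux_lin_deg {k : Type*} [Field k] (D E G : k) :
    (C D * X 0 + C E * X 1 + C G : MvPolynomial (Fin 2) k).totalDegree ≤ 1 := by
  refine le_trans (totalDegree_add _ _) (max_le (le_trans (totalDegree_add _ _) (max_le ?_ ?_)) ?_)
  · exact le_trans (totalDegree_mul _ _) (by simp [totalDegree_X])
  · exact le_trans (totalDegree_mul _ _) (by simp [totalDegree_X])
  · simp

lemma aux_comb {k : Type*} [Field k]
    (a₁ b₁ c₁ d₁ e₁ g₁ a₂ b₂ c₂ d₂ e₂ g₂ α β : k)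
    (f₁ f₂ : MvPolynomial (Fin 2) k)
    (hf₁ : f₁ = C a₁ * X 0 ^ 2 + C (2 * b₁) * (X 0 * X 1) + C c₁ * X 1 ^ 2 +
      C (2 * d₁) * X 0 + C (2 * e₁) * X 1 + C g₁)
    (hf₂ : f₂ = C a₂ * X 0 ^ 2 + C (2 * b₂) * (X 0 * X 1) + C c₂ * X 1 ^ 2 +
      C (2 * d₂) * X 0 + C (2 * e₂) * X 1 + C g₂)
    (hαβ : ¬(α = 0 ∧ β = 0))
    (ha : α * a₁ + β * a₂ = 0) (hb : α * b₁ + β * b₂ = 0) (hc : α * c₁ + β * c₂ = 0)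
    (hind : Indep f₁ f₂) : False := by
  have HA : (C α * C a₁ + C β * C a₂ : MvPolynomial (Fin 2) k) = 0 := by
    rw [← map_mul, ← map_mul, ← map_add, ha, map_zero]
  have HB : (C α * C b₁ + C β * C b₂ : MvPolynomial (Fin 2) k) = 0 := by
    rw [← map_mul, ← map_mul, ← map_add, hb, map_zero]
  have HC : (C α * C c₁ + C β * C c₂ : MvPolynomial (Fin 2) k) = 0 := by
    rw [← map_mul, ← map_mul, ← map_add, hc, map_zero]
  have key : C α * f₁ + C β * f₂ =
      C (2 * (α * d₁ + β * d₂)) * X 0 + C (2 * (α * e₁ + β * e₂)) * X 1 +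
        C (α * g₁ + β * g₂) := by
    rw [hf₁, hf₂]
    simp only [map_mul, map_add]
    linear_combination (X 0 ^ 2 : MvPolynomial (Fin 2) k) * HA +
      (C (2 : k) * (X 0 * X 1)) * HB + (X 1 ^ 2 : MvPolynomial (Fin 2) k) * HC
  have h2 := hind α β hαβ
  rw [key] at h2
  have := aux_lin_deg (k := k) (2 * (α * d₁ + β * d₂)) (2 * (α * e₁ + β * e₂))
    (α * g₁ + β * g₂)
  omega

/-- For independent quadratics `fᵢ = aᵢX² + 2bᵢXY + cᵢY² + 2dᵢX + 2eᵢY + gᵢ`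
over an algebraically closed field, the binary form
`Φ(U,V) = (a₁c₁ − b₁²)U² + (a₁c₂ + a₂c₁ − 2b₁b₂)UV + (a₂c₂ − b₂²)V²`
is not identically zero. -/
theorem stmt11 {k : Type*} [Field k] [IsAlgClosed k] (hch : (2 : k) ≠ 0)
    (a₁ b₁ c₁ d₁ e₁ g₁ a₂ b₂ c₂ d₂ e₂ g₂ : k)
    (f₁ f₂ : MvPolynomial (Fin 2) k)
    (hf₁ : f₁ = C a₁ * X 0 ^ 2 + C (2 * b₁) * (X 0 * X 1) + C c₁ * X 1 ^ 2 +
      C (2 * d₁) * X 0 + C (2 * e₁) * X 1 + C g₁)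
    (hf₂ : f₂ = C a₂ * X 0 ^ 2 + C (2 * b₂) * (X 0 * X 1) + C c₂ * X 1 ^ 2 +
      C (2 * d₂) * X 0 + C (2 * e₂) * X 1 + C g₂)
    (hind : Indep f₁ f₂) :
    ¬(a₁ * c₁ - b₁ ^ 2 = 0 ∧ a₁ * c₂ + a₂ * c₁ - 2 * b₁ * b₂ = 0 ∧
      a₂ * c₂ - b₂ ^ 2 = 0) := by
  rintro ⟨h1, h2, h3⟩
  -- derive vanishing of all 2×2 minors
  have hac : a₁ * c₂ - a₂ * c₁ = 0 := by
    have : (a₁ * c₂ - a₂ * c₁) ^ 2 = 0 := by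
      linear_combination (a₁ * c₂ + a₂ * c₁ + 2 * b₁ * b₂) * h2 - 4 * a₂ * c₂ * h1
        - 4 * b₁ ^ 2 * h3
    exact sq_eq_zero_iff.mp this
  have hab : a₁ * b₂ - a₂ * b₁ = 0 := by
    have : (a₁ * b₂ - a₂ * b₁) ^ 2 = 0 := by
      linear_combination a₁ * a₂ * h2 - a₂ ^ 2 * h1 - a₁ ^ 2 * h3
    exact sq_eq_zero_iff.mp this
  have hbc : b₁ * c₂ - b₂ * c₁ = 0 := by
    have : (b₁ * c₂ - b₂ * c₁) ^ 2 = 0 := by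
      linear_combination c₁ * c₂ * h2 - c₂ ^ 2 * h1 - c₁ ^ 2 * h3
    exact sq_eq_zero_iff.mp this
  by_cases ha1 : a₁ = 0
  · by_cases hb1 : b₁ = 0
    · by_cases hc1 : c₁ = 0
      · exact aux_comb a₁ b₁ c₁ d₁ e₁ g₁ a₂ b₂ c₂ d₂ e₂ g₂ 1 0 f₁ f₂ hf₁ hf₂
          (by simp) (by simp [ha1]) (by simp [hb1]) (by simp [hc1]) hind
      · exact aux_comb a₁ b₁ c₁ d₁ e₁ g₁ a₂ b₂ c₂ d₂ e₂ g₂ c₂ (-c₁) f₁ f₂ hf₁ hf₂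
          (by simp [hc1]) (by linear_combination hac) (by linear_combination hbc)
          (by ring) hind
    · exact aux_comb a₁ b₁ c₁ d₁ e₁ g₁ a₂ b₂ c₂ d₂ e₂ g₂ b₂ (-b₁) f₁ f₂ hf₁ hf₂
        (by simp [hb1]) (by linear_combination hab) (by ring)
        (by linear_combination -hbc) hind
  · exact aux_comb a₁ b₁ c₁ d₁ e₁ g₁ a₂ b₂ c₂ d₂ e₂ g₂ a₂ (-a₁) f₁ f₂ hf₁ hf₂
      (by simp [ha1]) (by ring) (by linear_combination -hab)
      (by linear_combination -hac) hind
end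

section
/- Let k be an algebraically closed field of characteristic not 2 and let f = aX² + 2bXY + cY² + 2dX + 2eY + g be a quadratic in k[X,Y]. Then f is a product of two linear polynomials over k if and only if the determinant of the symmetric matrix [[a, b, d], [b, c, e], [d, e, g]] is zero. -/
open MvPolynomial

private lemma stmt12_repr {k : Type*} [Field k] (f : MvPolynomial (Fin 2) k)
    (h : f.totalDegree ≤ 1) :
    f = C (f.coeff (Finsupp.single 0 1)) * X 0 + C (f.coeff (Finsupp.single 1 1)) * X 1
        + C (f.coeff 0) := by
  have hdeg : ∀ m : Fin 2 →₀ ℕ, f.coeff m ≠ 0 → m 0 + m 1 ≤ 1 := by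
    intro m hm
    have := le_trans (le_totalDegree (mem_support_iff.2 hm)) h
    simpa [Finsupp.sum_fintype, Fin.sum_univ_two] using this
  ext m
  simp only [coeff_add, coeff_C, coeff_X', coeff_C_mul]
  by_cases h1 : (Finsupp.single (0:Fin 2) 1) = m
  · subst h1
    simp [Finsupp.single_eq_single_iff, eq_comm, Finsupp.single_eq_zero]
  by_cases h2 : (Finsupp.single (1:Fin 2) 1) = m
  · subst h2
    simp [Finsupp.single_eq_single_iff, eq_comm, Finsupp.single_eq_zero, h1]
  by_cases h3 : (0 : Fin 2 →₀ ℕ) = m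
  · subst h3
    simp [eq_comm, Finsupp.single_eq_zero, h1, h2]
  · rw [if_neg h1, if_neg h2, if_neg h3]
    simp only [mul_zero, add_zero, zero_add]
    by_contra hc
    have hle := hdeg m hc
    have : (m 0 = 0 ∧ m 1 = 0) ∨ (m 0 = 1 ∧ m 1 = 0) ∨ (m 0 = 0 ∧ m 1 = 1) := by omega
    rcases this with ⟨e0,e1⟩|⟨e0,e1⟩|⟨e0,e1⟩
    · exact h3 (by ext i; fin_cases i <;> simp [e0, e1])
    · exact h1 (by ext i; fin_cases i <;> simp [e0, e1])
    · exact h2 (by ext i; fin_cases i <;> simp [e0, e1])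

private lemma stmt12_deglin {k : Type*} [Field k] (p q r : k) :
    (C p * X 0 + C q * X 1 + C r : MvPolynomial (Fin 2) k).totalDegree ≤ 1 := by
  have h1 : (C p * X 0 : MvPolynomial (Fin 2) k).totalDegree ≤ 1 :=
    (totalDegree_mul _ _).trans (by simp [totalDegree_X])
  have h2 : (C q * X 1 : MvPolynomial (Fin 2) k).totalDegree ≤ 1 :=
    (totalDegree_mul _ _).trans (by simp [totalDegree_X])
  have h3 : (C r : MvPolynomial (Fin 2) k).totalDegree ≤ 1 := by
    simp [totalDegree_C]
  exact (totalDegree_add _ _).trans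
    (max_le ((totalDegree_add _ _).trans (max_le h1 h2)) h3)

private lemma stmt12_sqpair {k : Type*} [Field k] [IsAlgClosed k] (A B G : k)
    (h : B ^ 2 = A * G) : ∃ α β : k, α ^ 2 = -A ∧ α * β = -B ∧ β ^ 2 = -G := by
  obtain ⟨α, hα⟩ := IsAlgClosed.exists_pow_nat_eq (-A) zero_lt_two
  by_cases hz : α = 0
  · have hA : A = 0 := by rw [hz] at hα; simpa using hα.symm
    have hB : B = 0 := by
      have : B ^ 2 = 0 := by rw [h, hA, zero_mul]
      exact pow_eq_zero_iff (n := 2) (by norm_num) |>.mp this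
    obtain ⟨β, hβ⟩ := IsAlgClosed.exists_pow_nat_eq (-G) zero_lt_two
    exact ⟨α, β, hα, by simp [hz, hB], hβ⟩
  · have hA : A ≠ 0 := by
      intro hA0
      apply hz
      have : α ^ 2 = 0 := by rw [hα, hA0, neg_zero]
      exact pow_eq_zero_iff (n := 2) (by norm_num) |>.mp this
    refine ⟨α, -B / α, hα, ?_, ?_⟩
    · field_simp
    · field_simp
      linear_combination G * hα + h

private lemma stmt12_key {k : Type*} [Field k] [IsAlgClosed k] (a b c d e g : k)
    (ha : a ≠ 0)
    (hΔ : a * c * g + 2 * (b * d * e) - a * e ^ 2 - c * d ^ 2 - b ^ 2 * g = 0) :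
    ∃ p q r p' q' r' : k, a = p * p' ∧ 2 * b = p * q' + q * p' ∧ c = q * q' ∧
      2 * d = p * r' + r * p' ∧ 2 * e = q * r' + r * q' ∧ g = r * r' := by
  obtain ⟨α, β, h1, h2, h3⟩ := stmt12_sqpair (a * c - b ^ 2) (a * e - b * d)
    (a * g - d ^ 2) (by linear_combination (-a) * hΔ)
  refine ⟨1, (b + α) / a, (d + β) / a, a, b - α, d - β, by ring, ?_, ?_, ?_, ?_, ?_⟩
  · field_simp
    ring
  · field_simp
    linear_combination h1
  · field_simp
    ring
  · field_simp
    linear_combination 2 * h2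
  · field_simp
    linear_combination h3

private lemma stmt12_build {k : Type*} [Field k] (a b c d e g p q r p' q' r' : k)
    (h1 : a = p * p') (h2 : 2 * b = p * q' + q * p') (h3 : c = q * q')
    (h4 : 2 * d = p * r' + r * p') (h5 : 2 * e = q * r' + r * q') (h6 : g = r * r') :
    (C a * X 0 ^ 2 + C (2 * b) * (X 0 * X 1) + C c * X 1 ^ 2 +
        C (2 * d) * X 0 + C (2 * e) * X 1 + C g : MvPolynomial (Fin 2) k)
      = (C p * X 0 + C q * X 1 + C r) * (C p' * X 0 + C q' * X 1 + C r') := by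
  rw [h1, h2, h3, h4, h5, h6]
  simp only [map_mul, map_add]
  ring

/-- Over an algebraically closed field of characteristic ≠ 2, the quadratic
`aX² + 2bXY + cY² + 2dX + 2eY + g` is a product of two linear polynomials iff
the determinant of the associated symmetric matrix vanishes. -/
theorem stmt12 {k : Type*} [Field k] [IsAlgClosed k] (hch : (2 : k) ≠ 0)
    (a b c d e g : k) (hq : ¬(a = 0 ∧ b = 0 ∧ c = 0)) :
    (∃ l₁ l₂ : MvPolynomial (Fin 2) k,
        l₁.totalDegree ≤ 1 ∧ l₂.totalDegree ≤ 1 ∧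
        C a * X 0 ^ 2 + C (2 * b) * (X 0 * X 1) + C c * X 1 ^ 2 +
          C (2 * d) * X 0 + C (2 * e) * X 1 + C g = l₁ * l₂) ↔
      Matrix.det !![a, b, d; b, c, e; d, e, g] = 0 := by
  have hdet : Matrix.det !![a, b, d; b, c, e; d, e, g]
      = a * c * g + 2 * (b * d * e) - a * e ^ 2 - c * d ^ 2 - b ^ 2 * g := by
    simp [Matrix.det_fin_three]
    ring
  rw [hdet]
  constructor
  · rintro ⟨l₁, l₂, hd1, hd2, heq⟩
    rw [stmt12_repr l₁ hd1, stmt12_repr l₂ hd2] at heq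
    set p := l₁.coeff (Finsupp.single 0 1) with hp
    set q := l₁.coeff (Finsupp.single 1 1) with hqq
    set r := l₁.coeff 0 with hr
    set p' := l₂.coeff (Finsupp.single 0 1) with hp'
    set q' := l₂.coeff (Finsupp.single 1 1) with hq'
    set r' := l₂.coeff 0 with hr'
    have E : ∀ x y : k,
        a * x ^ 2 + 2 * b * (x * y) + c * y ^ 2 + 2 * d * x + 2 * e * y + g
          = (p * x + q * y + r) * (p' * x + q' * y + r') := by
      intro x y
      have := congrArg (eval ![x, y]) heq
      simpa using this
    have can : ∀ u v : k, 2 * u = 2 * v → u = v := fun u v h => mul_left_cancel₀ hch h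
    have hg : g = r * r' := by linear_combination E 0 0
    have ha : a = p * p' := can _ _ (by linear_combination E 1 0 + E (-1) 0 - 2 * E 0 0)
    have hc : c = q * q' := can _ _ (by linear_combination E 0 1 + E 0 (-1) - 2 * E 0 0)
    have hd : 2 * d = p * r' + r * p' := can _ _ (by linear_combination E 1 0 - E (-1) 0)
    have he : 2 * e = q * r' + r * q' := can _ _ (by linear_combination E 0 1 - E 0 (-1))
    have hb : 2 * b = p * q' + q * p' :=
      can _ _ (can _ _ (by linear_combination E 1 1 + E (-1) (-1) - E 1 (-1) - E (-1) 1))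
    refine can _ _ (can _ _ ?_)
    linear_combination (4*c*g - (2*e)^2) * ha + (4*(p*p')*g - (2*d)^2) * hc
      + (4*(p*p')*(q*q') - (2*b)^2) * hg
      + ((2*d)*(2*e) - (2*b + (p*q'+q*p'))*(r*r')) * hb
      + ((p*q'+q*p')*(2*e) - (q*q')*(2*d + (p*r'+r*p'))) * hd
      + ((p*q'+q*p')*(p*r'+r*p') - (p*p')*(2*e + (q*r'+r*q'))) * he
  · intro hΔ
    by_cases ha : a ≠ 0
    · obtain ⟨p, q, r, p', q', r', h1, h2, h3, h4, h5, h6⟩ := stmt12_key a b c d e g ha hΔ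
      exact ⟨_, _, stmt12_deglin p q r, stmt12_deglin p' q' r',
        stmt12_build a b c d e g p q r p' q' r' h1 h2 h3 h4 h5 h6⟩
    push_neg at ha
    by_cases hc : c ≠ 0
    · obtain ⟨p, q, r, p', q', r', h1, h2, h3, h4, h5, h6⟩ :=
        stmt12_key c b a e d g hc (by linear_combination hΔ)
      exact ⟨_, _, stmt12_deglin q p r, stmt12_deglin q' p' r',
        stmt12_build a b c d e g q p r q' p' r' h3 (by linear_combination h2) h1
          (by linear_combination h5) (by linear_combination h4) h6⟩
    push_neg at hc
    have hb : b ≠ 0 := by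
      intro hb0
      exact hq ⟨ha, hb0, hc⟩
    refine ⟨_, _, stmt12_deglin (2 * b) 0 (2 * e), stmt12_deglin 0 1 (d / b),
      stmt12_build a b c d e g (2 * b) 0 (2 * e) 0 1 (d / b) (by rw [ha]; ring)
        (by ring) (by rw [hc]; ring) (by field_simp; ring) (by ring) ?_⟩
    rw [ha, hc] at hΔ
    have hg2 : g * b = 2 * e * d := mul_left_cancel₀ hb (by linear_combination -hΔ)
    field_simp
    linear_combination hg2
end

section
/- Let k be a field of characteristic not 2, and let f = Y·m ∈ k[X,Y] be a reducible quadratic with linear factor Y and m a linear polynomial of degree 1 not proportional to Y. If g is any quadratic with f − g ∈ k and g reducible over k, and the two linear factors of f define non-parallel lines, then g = f. (Uniqueness of the degeneration of a degenerate hyperbola.) -/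
open MvPolynomial

lemma aux_repr {k : Type*} [CommRing k] (p : MvPolynomial (Fin 2) k) (hp : p.totalDegree ≤ 1) :
    p = C (coeff (Finsupp.single 0 1) p) * X 0 + C (coeff (Finsupp.single 1 1) p) * X 1 + C (coeff 0 p) := by
  ext d
  have hsum : (∑ i ∈ d.support, d i) = d 0 + d 1 := by
    rw [show (∑ i ∈ d.support, d i) = d.sum fun _ n => n from rfl, Finsupp.sum_fintype] <;>
      simp [Fin.sum_univ_two]
  have hd : d = Finsupp.single 0 (d 0) + Finsupp.single 1 (d 1) := by
    ext i; fin_cases i <;> simp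
  by_cases h2 : 2 ≤ d 0 + d 1
  · have hz : coeff d p = 0 := by
      apply coeff_eq_zero_of_totalDegree_lt
      rw [hsum]; omega
    rw [hz]
    simp only [coeff_add, coeff_C_mul, coeff_X', coeff_C]
    have h0 : ¬ (Finsupp.single 0 1 : Fin 2 →₀ ℕ) = d := by
      intro h
      have e0 : d 0 = 1 := by rw [← h]; simp
      have e1 : d 1 = 0 := by rw [← h]; simp
      omega
    have h1 : ¬ (Finsupp.single 1 1 : Fin 2 →₀ ℕ) = d := by
      intro h
      have e0 : d 0 = 0 := by rw [← h]; simp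
      have e1 : d 1 = 1 := by rw [← h]; simp
      omega
    have h00 : ¬ (0 : Fin 2 →₀ ℕ) = d := by
      intro h
      have e0 : d 0 = 0 := by rw [← h]; simp
      have e1 : d 1 = 0 := by rw [← h]; simp
      omega
    simp [h0, h1, h00]
  · have b0 : d 0 ≤ 1 := by omega
    have b1 : d 1 ≤ 1 := by omega
    interval_cases h0 : d 0 <;> interval_cases h1 : d 1 <;>
      rw [hd] <;>
      simp_all [coeff_add, coeff_C_mul, coeff_X', coeff_C, Finsupp.single_eq_single_iff,
        Finsupp.ext_iff, Fin.forall_fin_two]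

lemma aux_hc1 {k : Type*} [CommRing k] (b e : k) :
    homogeneousComponent 1 ((C b * X 1 + C e) : MvPolynomial (Fin 2) k) = C b * X 1 := by
  rw [map_add, homogeneousComponent_C_mul]
  have h1 : homogeneousComponent 1 (X 1 : MvPolynomial (Fin 2) k) = X 1 := by
    rw [homogeneousComponent_of_mem ((mem_homogeneousSubmodule _ _).2 (isHomogeneous_X _ _))]
    simp
  have h0 : homogeneousComponent 1 (C e : MvPolynomial (Fin 2) k) = 0 := by
    rw [homogeneousComponent_of_mem ((mem_homogeneousSubmodule _ _).2 (isHomogeneous_C _ _))]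
    simp
  rw [h1, h0, add_zero]

/-- Uniqueness of the degeneration of a degenerate hyperbola: if `f = Y·m` with
`m` linear and the lines `Y = 0`, `m = 0` non-parallel, and `g` is a reducible
quadratic with `f − g` constant, then `g = f`. -/
theorem stmt18 {k : Type*} [Field k] (hch : (2 : k) ≠ 0)
    (m g : MvPolynomial (Fin 2) k)
    (hm : m.totalDegree = 1)
    (hnp : ¬ ∃ c : k, homogeneousComponent 1 m = C c * X 1)
    (hg : ∃ l₁ l₂ : MvPolynomial (Fin 2) k,
      l₁.totalDegree = 1 ∧ l₂.totalDegree = 1 ∧ g = l₁ * l₂)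
    (hdiff : ∃ c : k, X 1 * m - g = C c) :
    g = X 1 * m := by
  obtain ⟨l₁, l₂, h₁, h₂, hgl⟩ := hg
  obtain ⟨c, hc⟩ := hdiff
  have hmr := aux_repr m hm.le
  have hl1 := aux_repr l₁ h₁.le
  have hl2 := aux_repr l₂ h₂.le
  set a := coeff (Finsupp.single 0 1) m with ha_def
  set b := coeff (Finsupp.single 1 1) m
  set e := coeff 0 m
  set a₁ := coeff (Finsupp.single 0 1) l₁
  set b₁ := coeff (Finsupp.single 1 1) l₁
  set e₁ := coeff 0 l₁
  set a₂ := coeff (Finsupp.single 0 1) l₂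
  set b₂ := coeff (Finsupp.single 1 1) l₂
  set e₂ := coeff 0 l₂
  have ha : a ≠ 0 := by
    intro h
    refine hnp ⟨b, ?_⟩
    rw [hmr, h]
    simp only [map_zero, zero_mul, zero_add]
    exact aux_hc1 b e
  have heq : X 1 * (C a * X 0 + C b * X 1 + C e)
      - (C a₁ * X 0 + C b₁ * X 1 + C e₁) * (C a₂ * X 0 + C b₂ * X 1 + C e₂)
      = (C c : MvPolynomial (Fin 2) k) := by
    rw [← hmr, ← hl1, ← hl2, ← hgl]; exact hc
  have EX2 := congrArg (coeff (Finsupp.single 0 2)) heq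
  have EXY := congrArg (coeff (Finsupp.single 0 1 + Finsupp.single 1 1)) heq
  have EX := congrArg (coeff (Finsupp.single 0 1)) heq
  have E0 := congrArg (coeff (0 : Fin 2 →₀ ℕ)) heq
  simp only [X, C_apply, mul_add, add_mul, monomial_mul, coeff_sub, coeff_add,
    coeff_monomial] at EX2 EXY EX E0
  norm_num [Finsupp.ext_iff, Fin.forall_fin_two, Finsupp.add_apply, Finsupp.single_apply] at EX2 EXY EX E0
  have hc0 : c = 0 := by
    rcases EX2 with h | h
    · have ha2 : a₂ ≠ 0 := by
        intro h'
        exact ha (by linear_combination EXY + b₁ * h' + b₂ * h)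
      have he1 : e₁ = 0 := by
        have hprod : e₁ * a₂ = 0 := by linear_combination (-1) * EX - e₂ * h
        rcases mul_eq_zero.1 hprod with h'' | h''
        · exact h''
        · exact absurd h'' ha2
      linear_combination -E0 - e₂ * he1
    · have ha1 : a₁ ≠ 0 := by
        intro h'
        exact ha (by linear_combination EXY + b₂ * h' + b₁ * h)
      have he2 : e₂ = 0 := by
        have hprod : a₁ * e₂ = 0 := by linear_combination (-1) * EX - e₁ * h
        rcases mul_eq_zero.1 hprod with h'' | h''
        · exact absurd h'' ha1
        · exact h''
      linear_combination -E0 - e₁ * he2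
  rw [hc0, map_zero] at hc
  exact (sub_eq_zero.1 hc).symm
end
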